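/- Let n ≥ 3, let C be the n×n real circulant matrix with entries C_{i,i+1 mod n} = C_{i,i−1 mod n} = 1/2 and all other entries 0, let I be the n×n identity, and let k_φ, k_ω > 0. Define the 2n×2n real block matrix à = [[0, k_ω I], [C − I, k_φ(C − I)]]. Then for every w = (w₁, w₂) ∈ ℝⁿ × ℝⁿ with Σᵢ (w₁)ᵢ = 0 and Σᵢ (w₂)ᵢ = 0, one has exp(t·Ã)·w → 0 as t → ∞. -/

import Mathlib

open Matrix

/-- The `n × n` circulant matrix with first row `(0, 1/2, 0, …, 0, 1/2)`. -/
noncomputable def ringC (n : ℕ) : Matrix (Fin n) (Fin n) ℝ :=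
  Matrix.of fun i j =>
    if ((i : ℕ) + 1) % n = (j : ℕ) ∨ ((j : ℕ) + 1) % n = (i : ℕ) then (1 : ℝ) / 2 else 0

section Aux
variable {n : ℕ} [NeZero n]

lemma shift_val_aux11 (hn : 3 ≤ n) (i : Fin n) : ((i + 1 : Fin n) : ℕ) = ((i:ℕ)+1) % n := by
  rw [Fin.add_def, Fin.val_one']
  simp [Nat.one_mod_eq_one.mpr (show n ≠ 1 by omega)]

lemma two_val_aux11 (hn : 3 ≤ n) : ((2 : Fin n) : ℕ) = 2 := by
  rw [show (2 : Fin n) = 1 + 1 from Fin.ext (by simp [Fin.val_add]), Fin.add_def, Fin.val_one']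
  have h1 : 1 % n = 1 := Nat.one_mod_eq_one.mpr (by omega)
  simp only [h1]
  exact Nat.mod_eq_of_lt (by omega)

lemma shift_ne_aux11 (hn : 3 ≤ n) (i : Fin n) : i + 1 ≠ i - 1 := by
  intro h
  have h2 : (i + 1) - (i - 1) = (2 : Fin n) := by
    rw [show (2 : Fin n) = 1 + 1 from Fin.ext (by simp [Fin.val_add])]; abel
  rw [h, sub_self] at h2
  have h3 := congrArg Fin.val h2
  rw [Fin.val_zero, two_val_aux11 hn] at h3
  omega

lemma ringC_mulVec_aux11 (hn : 3 ≤ n) (v : Fin n → ℝ) (i : Fin n) :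
    (ringC n *ᵥ v) i = (v (i+1) + v (i-1))/2 := by
  have hC : ∀ j : Fin n,
      ((((i:ℕ)+1) % n = (j:ℕ) ∨ ((j:ℕ)+1) % n = (i:ℕ))) ↔ (j = i+1 ∨ j = i-1) := by
    intro j
    rw [← shift_val_aux11 hn i, ← shift_val_aux11 hn j]
    constructor
    · rintro (h | h)
      · exact Or.inl (Fin.ext h).symm
      · exact Or.inr (eq_sub_iff_add_eq.mpr (Fin.ext h))
    · rintro (h | h)
      · exact Or.inl (congrArg Fin.val h.symm)
      · exact Or.inr (congrArg Fin.val (eq_sub_iff_add_eq.mp h))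
  have hterm : ∀ j : Fin n,
      ringC n i j * v j
        = (if j = i+1 then v j / 2 else 0) + (if j = i-1 then v j / 2 else 0) := by
    intro j
    simp only [ringC, Matrix.of_apply, hC j]
    by_cases h1 : j = i + 1 <;> by_cases h2 : j = i - 1
    · exact absurd (h1 ▸ h2) (shift_ne_aux11 hn i)
    · rw [if_pos (Or.inl h1), if_pos h1, if_neg h2]; ring
    · rw [if_pos (Or.inr h2), if_neg h1, if_pos h2]; ring
    · rw [if_neg (by tauto), if_neg h1, if_neg h2]; ring
  simp only [Matrix.mulVec, dotProduct, hterm, Finset.sum_add_distrib,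
    Finset.sum_ite_eq', Finset.mem_univ, if_true]
  ring

lemma ringC_sum_aux11 (hn : 3 ≤ n) (v : Fin n → ℝ) : ∑ i, (ringC n *ᵥ v) i = ∑ i, v i := by
  simp only [ringC_mulVec_aux11 hn]
  have e1 : ∑ i : Fin n, v (i + 1) = ∑ i, v i := Equiv.sum_comp (Equiv.addRight 1) v
  have e2 : ∑ i : Fin n, v (i - 1) = ∑ i, v i := Equiv.sum_comp (Equiv.subRight 1) v
  rw [← Finset.sum_div, Finset.sum_add_distrib, e1, e2]
  ring

lemma ringC_bilin_aux11 (hn : 3 ≤ n) (u v : Fin n → ℝ) :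
    ∑ i, u i * (v i - (ringC n *ᵥ v) i)
      = (1/2) * ∑ i, (u (i+1) - u i) * (v (i+1) - v i) := by
  simp only [ringC_mulVec_aux11 hn]
  have e1 : ∑ i : Fin n, u i * v (i - 1) = ∑ i : Fin n, u (i + 1) * v i := by
    refine Fintype.sum_equiv (Equiv.subRight 1) _ _ (fun i => ?_)
    simp [Equiv.subRight, sub_add_cancel]
  have e2 : ∑ i : Fin n, u (i+1) * v (i+1) = ∑ i : Fin n, u i * v i :=
    Equiv.sum_comp (Equiv.addRight 1) (fun i => u i * v i)
  have expand : ∀ i : Fin n, (u (i+1) - u i) * (v (i+1) - v i)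
      = u (i+1) * v (i+1) + u i * v i - u (i+1) * v i - u i * v (i+1) := by
    intro i; ring
  simp only [expand]
  rw [Finset.sum_sub_distrib, Finset.sum_sub_distrib, Finset.sum_add_distrib, e2]
  have lhs : ∀ i : Fin n, u i * (v i - (v (i+1) + v (i-1))/2)
      = u i * v i - (u i * v (i+1)) / 2 - (u i * v (i-1)) / 2 := by
    intro i; ring
  simp only [lhs]
  rw [Finset.sum_sub_distrib, Finset.sum_sub_distrib, ← Finset.sum_div, ← Finset.sum_div, e1]
  ring

lemma gap_aux11 (hn : 3 ≤ n) (u : Fin n → ℝ) (hu : ∑ i, u i = 0) :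
    ∑ i, (u i)^2 ≤ 4 * (n:ℝ)^4 * ∑ i, (u (i+1) - u i)^2 := by
  set d : Fin n → ℝ := fun i => u (i+1) - u i with hd
  set D : ℝ := ∑ i, |d i| with hD
  have hD0 : 0 ≤ D := Finset.sum_nonneg fun i _ => abs_nonneg _
  have hone : ∀ j : Fin n, |d j| ≤ D := fun j =>
    Finset.single_le_sum (fun i _ => abs_nonneg (d i)) (Finset.mem_univ j)
  have npos : 0 < n := by omega
  have key1 : ∀ k : ℕ, ∀ hk : k < n, |u ⟨k, hk⟩ - u 0| ≤ k * D := by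
    intro k
    induction k with
    | zero => intro hk; simp [show (⟨0, hk⟩ : Fin n) = 0 from rfl]
    | succ m ih =>
      intro hk
      have hm : m < n := by omega
      have hstep : (⟨m, hm⟩ : Fin n) + 1 = ⟨m + 1, hk⟩ := by
        apply Fin.ext
        rw [Fin.add_def, Fin.val_one']
        simp [Nat.one_mod_eq_one.mpr (show n ≠ 1 by omega), Nat.mod_eq_of_lt hk]
      have hdm : u ⟨m+1, hk⟩ - u ⟨m, hm⟩ = d ⟨m, hm⟩ := by rw [hd]; simp [hstep]
      calc |u ⟨m+1, hk⟩ - u 0|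
          = |(u ⟨m+1, hk⟩ - u ⟨m, hm⟩) + (u ⟨m, hm⟩ - u 0)| := by ring_nf
        _ ≤ |u ⟨m+1, hk⟩ - u ⟨m, hm⟩| + |u ⟨m, hm⟩ - u 0| := abs_add_le _ _
        _ ≤ D + m * D := by
            refine add_le_add ?_ (ih hm)
            rw [hdm]; exact hone _
        _ = ((m+1 : ℕ) : ℝ) * D := by push_cast; ring
  have key1' : ∀ i : Fin n, |u i - u 0| ≤ n * D := by
    intro i
    have := key1 i.val i.isLt
    calc |u i - u 0| = |u ⟨i.val, i.isLt⟩ - u 0| := by rw [Fin.eta]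
      _ ≤ i.val * D := this
      _ ≤ n * D := by
          apply mul_le_mul_of_nonneg_right _ hD0
          exact_mod_cast le_of_lt i.isLt
  have key2 : |u 0| ≤ n * D := by
    have hsum : (n : ℝ) * u 0 = ∑ i : Fin n, (u 0 - u i) := by
      rw [Finset.sum_sub_distrib, hu, Finset.sum_const, Finset.card_univ, Fintype.card_fin]
      simp
    have habs : (n:ℝ) * |u 0| = |∑ i : Fin n, (u 0 - u i)| := by
      rw [← hsum, abs_mul, abs_of_nonneg (by positivity : (0:ℝ) ≤ (n:ℝ))]
    have hle : |∑ i : Fin n, (u 0 - u i)| ≤ ∑ i : Fin n, |u 0 - u i| :=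
      Finset.abs_sum_le_sum_abs _ _
    have hle2 : ∑ i : Fin n, |u 0 - u i| ≤ ∑ _i : Fin n, (n:ℝ) * D := by
      refine Finset.sum_le_sum fun i _ => ?_
      rw [abs_sub_comm]; exact key1' i
    have : (n:ℝ) * |u 0| ≤ n * (n * D) := by
      rw [habs]
      refine hle.trans (hle2.trans ?_)
      rw [Finset.sum_const, Finset.card_univ, Fintype.card_fin, nsmul_eq_mul]
    have hn' : (0:ℝ) < n := by positivity
    nlinarith
  have key3 : ∀ i : Fin n, |u i| ≤ 2 * n * D := by
    intro i
    calc |u i| = |(u i - u 0) + u 0| := by ring_nf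
      _ ≤ |u i - u 0| + |u 0| := abs_add_le _ _
      _ ≤ n * D + n * D := add_le_add (key1' i) key2
      _ = 2 * n * D := by ring
  have sq_bound : ∑ i, (u i)^2 ≤ (n:ℝ) * (2 * n * D)^2 := by
    calc ∑ i, (u i)^2 ≤ ∑ _i : Fin n, (2 * (n:ℝ) * D)^2 := by
          refine Finset.sum_le_sum fun i _ => ?_
          calc (u i)^2 = |u i|^2 := (sq_abs _).symm
            _ ≤ (2 * n * D)^2 := by
                apply pow_le_pow_left₀ (abs_nonneg _) (key3 i)
      _ = (n:ℝ) * (2*n*D)^2 := by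
          rw [Finset.sum_const, Finset.card_univ, Fintype.card_fin, nsmul_eq_mul]
  have CS : D^2 ≤ (n:ℝ) * ∑ i, (d i)^2 := by
    have h := sq_sum_le_card_mul_sum_sq (s := (Finset.univ : Finset (Fin n)))
      (f := fun i => |d i|)
    simpa [sq_abs, Finset.card_univ] using h
  have hd2 : (0:ℝ) ≤ ∑ i, (d i)^2 := Finset.sum_nonneg fun i _ => sq_nonneg _
  have hnn : (0:ℝ) < n := by positivity
  calc ∑ i, (u i)^2 ≤ (n:ℝ) * (2*n*D)^2 := sq_bound
    _ = 4 * (n:ℝ)^3 * D^2 := by ring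
    _ ≤ 4 * (n:ℝ)^3 * ((n:ℝ) * ∑ i, (d i)^2) := by
        apply mul_le_mul_of_nonneg_left CS (by positivity)
    _ = 4 * (n:ℝ)^4 * ∑ i, (d i)^2 := by ring

end Aux

set_option maxHeartbeats 1600000 in
/-- Convergence core of Proposition 3 (Controller 3): for any `w = (w₁, w₂)` with
`∑ᵢ (w₁)ᵢ = 0` and `∑ᵢ (w₂)ᵢ = 0`, the flow `exp(t Ã) w` of the error-dynamics matrix
`Ã = [[0, k_ω I], [C - I, k_φ (C - I)]]` tends to `0` as `t → ∞`. -/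
theorem stmt_11 (n : ℕ) (hn : 3 ≤ n) (kφ kω : ℝ) (hkφ : 0 < kφ) (hkω : 0 < kω)
    (w : Fin n ⊕ Fin n → ℝ)
    (h1 : ∑ i, w (Sum.inl i) = 0) (h2 : ∑ i, w (Sum.inr i) = 0) :
    Filter.Tendsto
      (fun t : ℝ => NormedSpace.exp
        (t • Matrix.fromBlocks 0 (kω • (1 : Matrix (Fin n) (Fin n) ℝ))
          (ringC n - 1) (kφ • (ringC n - 1))) *ᵥ w)
      Filter.atTop (nhds 0) := by
  haveI : NeZero n := ⟨by omega⟩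
  letI : SeminormedRing (Matrix (Fin n ⊕ Fin n) (Fin n ⊕ Fin n) ℝ) :=
    Matrix.linftyOpSemiNormedRing
  letI : NormedRing (Matrix (Fin n ⊕ Fin n) (Fin n ⊕ Fin n) ℝ) := Matrix.linftyOpNormedRing
  letI : NormedAlgebra ℝ (Matrix (Fin n ⊕ Fin n) (Fin n ⊕ Fin n) ℝ) :=
    Matrix.linftyOpNormedAlgebra
  set C : Matrix (Fin n) (Fin n) ℝ := ringC n with hCdef
  set A : Matrix (Fin n ⊕ Fin n) (Fin n ⊕ Fin n) ℝ :=
    Matrix.fromBlocks 0 (kω • (1 : Matrix (Fin n) (Fin n) ℝ)) (C - 1) (kφ • (C - 1)) with hAdef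
  set x : ℝ → (Fin n ⊕ Fin n → ℝ) := fun t => NormedSpace.exp (t • A) *ᵥ w with hxdef
  -- derivative of the flow
  have hx' : ∀ t, HasDerivAt x (A *ᵥ x t) t := by
    intro t
    have h := hasDerivAt_exp_smul_const' (𝕂 := ℝ) A t
    let L : Matrix (Fin n ⊕ Fin n) (Fin n ⊕ Fin n) ℝ →ₗ[ℝ] (Fin n ⊕ Fin n → ℝ) :=
      { toFun := fun M => M *ᵥ w
        map_add' := fun M N => Matrix.add_mulVec M N w
        map_smul' := fun c M => Matrix.smul_mulVec c M w }
    have hc := (L.toContinuousLinearMap.hasFDerivAt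
      (x := NormedSpace.exp (t • A))).comp_hasDerivAt t h
    exact hc.congr_deriv (by simp only [x, Matrix.mulVec_mulVec]; rfl)
  -- the two halves
  set u : ℝ → Fin n → ℝ := fun t i => x t (Sum.inl i) with hudef
  set v : ℝ → Fin n → ℝ := fun t i => x t (Sum.inr i) with hvdef
  have hx_elim : ∀ t, x t = Sum.elim (u t) (v t) := by
    intro t; funext j; cases j <;> rfl
  have hx0 : x 0 = w := by
    rw [hxdef]; simp [NormedSpace.exp_zero]
  have hAx_inl : ∀ t i, (A *ᵥ x t) (Sum.inl i) = kω * v t i := by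
    intro t i
    rw [hx_elim t, hAdef, Matrix.fromBlocks_mulVec]
    simp [Matrix.smul_mulVec]
  have hAx_inr : ∀ t i,
      (A *ᵥ x t) (Sum.inr i) = ((C *ᵥ u t) i - u t i) + kφ * ((C *ᵥ v t) i - v t i) := by
    intro t i
    rw [hx_elim t, hAdef, Matrix.fromBlocks_mulVec]
    simp [Matrix.sub_mulVec, Matrix.smul_mulVec]
  have hu' : ∀ t i, HasDerivAt (fun s => u s i) (kω * v t i) t := by
    intro t i
    have := (hasDerivAt_pi.mp (hx' t)) (Sum.inl i)
    rwa [hAx_inl t i] at this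
  have hv' : ∀ t i, HasDerivAt (fun s => v s i)
      (((C *ᵥ u t) i - u t i) + kφ * ((C *ᵥ v t) i - v t i)) t := by
    intro t i
    have := (hasDerivAt_pi.mp (hx' t)) (Sum.inr i)
    rwa [hAx_inr t i] at this
  -- conserved sums
  have hsv : ∀ t, ∑ i, v t i = 0 := by
    have hder : ∀ t, HasDerivAt (fun s => ∑ i, v s i) 0 t := by
      intro t
      have h := HasDerivAt.fun_sum (u := Finset.univ) (fun i _ => hv' t i)
      have hval : ∑ i : Fin n,
          (((C *ᵥ u t) i - u t i) + kφ * ((C *ᵥ v t) i - v t i)) = 0 := by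
        simp only [Finset.sum_add_distrib, Finset.sum_sub_distrib, ← Finset.mul_sum]
        rw [hCdef, ringC_sum_aux11 hn (u t), ringC_sum_aux11 hn (v t)]
        ring
      rwa [hval] at h
    have hconst : ∀ t, ∑ i, v t i = ∑ i, v 0 i := by
      intro t
      exact is_const_of_deriv_eq_zero
        (fun s => (hder s).differentiableAt) (fun s => (hder s).deriv) t 0
    intro t
    rw [hconst t]
    have : ∀ i, v 0 i = w (Sum.inr i) := by intro i; rw [hvdef]; simp [hx0]
    simp only [this]; exact h2
  have hsu : ∀ t, ∑ i, u t i = 0 := by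
    have hder : ∀ t, HasDerivAt (fun s => ∑ i, u s i) 0 t := by
      intro t
      have h := HasDerivAt.fun_sum (u := Finset.univ) (fun i _ => hu' t i)
      have hval : ∑ i : Fin n, kω * v t i = 0 := by
        rw [← Finset.mul_sum, hsv t, mul_zero]
      rwa [hval] at h
    have hconst : ∀ t, ∑ i, u t i = ∑ i, u 0 i := by
      intro t
      exact is_const_of_deriv_eq_zero
        (fun s => (hder s).differentiableAt) (fun s => (hder s).deriv) t 0
    intro t
    rw [hconst t]
    have : ∀ i, u 0 i = w (Sum.inl i) := by intro i; rw [hudef]; simp [hx0]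
    simp only [this]; exact h1
  -- scalar quantities
  set Q : ℝ → ℝ := fun t => ∑ i, (u t (i+1) - u t i)^2 with hQdef
  set Qv : ℝ → ℝ := fun t => ∑ i, (v t (i+1) - v t i)^2 with hQvdef
  set R : ℝ → ℝ := fun t => ∑ i, (u t (i+1) - u t i) * (v t (i+1) - v t i) with hRdef
  set N : ℝ → ℝ := fun t => ∑ i, (v t i)^2 with hNdef
  set Iuv : ℝ → ℝ := fun t => ∑ i, u t i * v t i with hIdef
  set S2 : ℝ → ℝ := fun t => ∑ i, (u t i)^2 with hS2def
  -- bilinear identities at each time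
  have hbil_uu : ∀ t, ∑ i, u t i * (u t i - (C *ᵥ u t) i) = (1/2) * Q t := by
    intro t
    have h := ringC_bilin_aux11 hn (u t) (u t)
    rw [h, hQdef]
    congr 1
    exact Finset.sum_congr rfl fun i _ => (sq (u t (i+1) - u t i)).symm
  have hbil_uv : ∀ t, ∑ i, u t i * (v t i - (C *ᵥ v t) i) = (1/2) * R t := fun t =>
    ringC_bilin_aux11 hn (u t) (v t)
  have hbil_vu : ∀ t, ∑ i, v t i * (u t i - (C *ᵥ u t) i) = (1/2) * R t := by
    intro t
    have h := ringC_bilin_aux11 hn (v t) (u t)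
    rw [h, hRdef]
    congr 1
    exact Finset.sum_congr rfl fun i _ => mul_comm _ _
  have hbil_vv : ∀ t, ∑ i, v t i * (v t i - (C *ᵥ v t) i) = (1/2) * Qv t := by
    intro t
    have h := ringC_bilin_aux11 hn (v t) (v t)
    rw [h, hQvdef]
    congr 1
    exact Finset.sum_congr rfl fun i _ => (sq (v t (i+1) - v t i)).symm
  -- derivatives of the scalar quantities
  have hQ' : ∀ t, HasDerivAt Q (2 * kω * R t) t := by
    intro t
    have h := HasDerivAt.fun_sum (u := Finset.univ)
      (fun i (_ : i ∈ Finset.univ) => (((hu' t (i+1)).fun_sub (hu' t i)).fun_pow 2))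
    have hval : ∑ i : Fin n, ((2:ℕ) * (u t (i+1) - u t i)^(2-1)
        * (kω * v t (i+1) - kω * v t i)) = 2 * kω * R t := by
      rw [hRdef, Finset.mul_sum]
      refine Finset.sum_congr rfl fun i _ => by push_cast; ring
    rwa [hval] at h
  have hN' : ∀ t, HasDerivAt N (-(R t) - kφ * Qv t) t := by
    intro t
    have h := HasDerivAt.fun_sum (u := Finset.univ)
      (fun i (_ : i ∈ Finset.univ) => (hv' t i).fun_pow 2)
    have hval : ∑ i : Fin n, ((2:ℕ) * (v t i)^(2-1)
        * (((C *ᵥ u t) i - u t i) + kφ * ((C *ᵥ v t) i - v t i)))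
        = -(R t) - kφ * Qv t := by
      have expand : ∀ i : Fin n, ((2:ℕ) * (v t i)^(2-1)
          * (((C *ᵥ u t) i - u t i) + kφ * ((C *ᵥ v t) i - v t i)))
          = -2 * (v t i * (u t i - (C *ᵥ u t) i))
            - 2 * kφ * (v t i * (v t i - (C *ᵥ v t) i)) := by
        intro i; push_cast; ring
      rw [Finset.sum_congr rfl fun i _ => expand i]
      rw [Finset.sum_sub_distrib, ← Finset.mul_sum, ← Finset.mul_sum, hbil_vu t, hbil_vv t]
      ring
    rwa [hval] at h
  have hI' : ∀ t, HasDerivAt Iuv (kω * N t - (1/2) * Q t - (kφ/2) * R t) t := by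
    intro t
    have h := HasDerivAt.fun_sum (u := Finset.univ)
      (fun i (_ : i ∈ Finset.univ) => (hu' t i).fun_mul (hv' t i))
    have hval : ∑ i : Fin n, (kω * v t i * v t i
        + u t i * (((C *ᵥ u t) i - u t i) + kφ * ((C *ᵥ v t) i - v t i)))
        = kω * N t - (1/2) * Q t - (kφ/2) * R t := by
      have expand : ∀ i : Fin n, (kω * v t i * v t i
          + u t i * (((C *ᵥ u t) i - u t i) + kφ * ((C *ᵥ v t) i - v t i)))
          = kω * (v t i)^2 - (u t i * (u t i - (C *ᵥ u t) i))
            - kφ * (u t i * (v t i - (C *ᵥ v t) i)) := by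
        intro i; ring
      rw [Finset.sum_congr rfl fun i _ => expand i]
      rw [Finset.sum_sub_distrib, Finset.sum_sub_distrib, ← Finset.mul_sum, ← Finset.mul_sum,
        hbil_uu t, hbil_uv t, hNdef]
      ring
    rwa [hval] at h
  have hS2mem : ∀ (t : ℝ) (i : Fin n), (u t i)^2 ≤ S2 t := fun t i =>
    Finset.single_le_sum (fun i _ => sq_nonneg (u t i)) (Finset.mem_univ i)
  have hNmem : ∀ (t : ℝ) (i : Fin n), (v t i)^2 ≤ N t := fun t i =>
    Finset.single_le_sum (fun i _ => sq_nonneg (v t i)) (Finset.mem_univ i)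
  -- constants
  set c : ℝ := 4 * (n:ℝ)^4 with hcdef
  have hc1 : (1:ℝ) ≤ c := by
    rw [hcdef]
    have h3 : (3:ℝ) ≤ (n:ℝ) := by exact_mod_cast hn
    have h4 : (1:ℝ) ≤ (n:ℝ)^4 := one_le_pow₀ (by linarith)
    linarith
  have hc0 : (0:ℝ) < c := lt_of_lt_of_le one_pos hc1
  set β : ℝ := (kω + 1) * c / kφ + 2 * kω * c + 1 with hβdef
  have hβ1 : (1:ℝ) ≤ β := by
    rw [hβdef]
    have h1' : 0 ≤ (kω + 1) * c / kφ := by positivity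
    nlinarith
  have hβ0 : (0:ℝ) < β := lt_of_lt_of_le one_pos hβ1
  have hβkφ : (kω + 1) * c ≤ β * kφ := by
    rw [hβdef]
    have hexp : ((kω + 1) * c / kφ + 2 * kω * c + 1) * kφ
        = (kω + 1) * c + (2 * kω * c + 1) * kφ := by field_simp; ring
    have hpos : 0 < (2 * kω * c + 1) * kφ := by positivity
    rw [hexp]
    linarith
  set a : ℝ := (2*β + kφ)/(4*kω) with hadef
  have ha0 : 0 < a := by rw [hadef]; positivity
  have hac : c ≤ a := by
    rw [hadef, hβdef, le_div_iff₀ (by positivity)]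
    have h1' : 0 ≤ (kω + 1) * c / kφ := by positivity
    nlinarith
  set V : ℝ → ℝ := fun t => a * Q t + Iuv t + β * N t with hVdef
  set Vd : ℝ → ℝ := fun t => kω * N t - (1/2) * Q t - β * kφ * Qv t with hVddef
  have hV' : ∀ t, HasDerivAt V (Vd t) t := by
    intro t
    have h := (((hQ' t).const_mul a).add (hI' t)).add ((hN' t).const_mul β)
    have hval : (a * (2 * kω * R t) + (kω * N t - (1/2) * Q t - (kφ/2) * R t))
        + β * (-(R t) - kφ * Qv t) = Vd t := by
      rw [hVddef, hadef]
      field_simp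
      ring
    rwa [hval] at h
  clear_value V Vd a β c Q Qv R N Iuv S2
  -- pointwise bounds at each time
  have hQ0 : ∀ t, 0 ≤ Q t := fun t => by
    rw [hQdef]; exact Finset.sum_nonneg fun i _ => sq_nonneg _
  have hQv0 : ∀ t, 0 ≤ Qv t := fun t => by
    rw [hQvdef]; exact Finset.sum_nonneg fun i _ => sq_nonneg _
  have hN0 : ∀ t, 0 ≤ N t := fun t => by
    rw [hNdef]; exact Finset.sum_nonneg fun i _ => sq_nonneg _
  have hS20 : ∀ t, 0 ≤ S2 t := fun t => by
    rw [hS2def]; exact Finset.sum_nonneg fun i _ => sq_nonneg _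
  have hgap_u : ∀ t, S2 t ≤ c * Q t := fun t => by
    rw [hS2def, hQdef, hcdef]; exact gap_aux11 hn (u t) (hsu t)
  have hgap_v : ∀ t, N t ≤ c * Qv t := fun t => by
    rw [hNdef, hQvdef, hcdef]; exact gap_aux11 hn (v t) (hsv t)
  have hIabs : ∀ t, |Iuv t| ≤ (1/2) * (S2 t + N t) := by
    intro t
    rw [hIdef]
    refine (Finset.abs_sum_le_sum_abs _ _).trans ?_
    rw [hS2def, hNdef, ← Finset.sum_add_distrib, Finset.mul_sum]
    refine Finset.sum_le_sum fun i _ => ?_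
    have := abs_mul (u t i) (v t i)
    nlinarith [sq_abs (u t i), sq_abs (v t i), sq_nonneg (|u t i| - |v t i|),
      abs_nonneg (u t i), abs_nonneg (v t i)]
  set K : ℝ := 2*a + c + 2*β + 2 with hKdef
  have hK0 : (0:ℝ) < K := by rw [hKdef]; positivity
  clear_value K
  have hVup : ∀ t, V t ≤ K * ((1/2) * Q t + N t) := by
    intro t
    have h := (abs_le.mp (hIabs t)).2
    have hs := hgap_u t
    have hq := hQ0 t; have hnn := hN0 t
    simp only [hVdef, hKdef]
    nlinarith [mul_nonneg ha0.le hq, mul_nonneg ha0.le hnn, mul_nonneg hβ0.le hq,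
      mul_nonneg hβ0.le hnn, mul_nonneg hc0.le hnn, hs, h, hq, hnn]
  have hVlow : ∀ t, (1/2) * (S2 t + N t) ≤ V t := by
    intro t
    have h := (abs_le.mp (hIabs t)).1
    have hs := hgap_u t
    have hq := hQ0 t; have hn2 := hN0 t; have hs2 := hS20 t
    simp only [hVdef]
    have haQ : S2 t ≤ a * Q t := by
      calc S2 t ≤ c * Q t := hs
        _ ≤ a * Q t := mul_le_mul_of_nonneg_right hac hq
    have hβN : N t ≤ β * N t := by nlinarith [mul_nonneg (show (0:ℝ) ≤ β - 1 by linarith) hn2]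
    linarith [haQ, hβN, h]
  have hV0 : ∀ t, 0 ≤ V t := fun t =>
    le_trans (by linarith [hS20 t, hN0 t] : (0:ℝ) ≤ (1/2) * (S2 t + N t)) (hVlow t)
  have hVd_le : ∀ t, Vd t ≤ -(1/K) * V t := by
    intro t
    have h1' : (kω + 1) * N t ≤ β * kφ * Qv t := by
      calc (kω + 1) * N t ≤ (kω + 1) * (c * Qv t) := by
            apply mul_le_mul_of_nonneg_left (hgap_v t) (by positivity)
        _ = ((kω + 1) * c) * Qv t := by ring
        _ ≤ (β * kφ) * Qv t := mul_le_mul_of_nonneg_right hβkφ (hQv0 t)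
    have h2' : Vd t ≤ -((1/2) * Q t + N t) := by
      simp only [hVddef]
      linarith [h1']
    have h3' : -((1/2) * Q t + N t) ≤ -(1/K) * V t := by
      have hKV := hVup t
      have h4 : (1/K) * V t ≤ (1/2) * Q t + N t := by
        rw [one_div, inv_mul_le_iff₀ hK0]
        linarith [hKV]
      linarith [h4]
    linarith
  -- exponential decay of V
  set ε : ℝ := 1/K with hεdef
  have hε0 : 0 < ε := by rw [hεdef]; positivity
  clear_value ε
  set G : ℝ → ℝ := fun t => V t * Real.exp (ε * t) with hGdef
  have hG' : ∀ t, HasDerivAt G ((Vd t + ε * V t) * Real.exp (ε * t)) t := by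
    intro t
    have he : HasDerivAt (fun s : ℝ => Real.exp (ε * s)) (ε * Real.exp (ε * t)) t := by
      have h0 := ((hasDerivAt_id t).const_mul ε).exp
      simpa [mul_comm] using h0
    have h := (hV' t).mul he
    have : Vd t * Real.exp (ε * t) + V t * (ε * Real.exp (ε * t))
        = (Vd t + ε * V t) * Real.exp (ε * t) := by ring
    rwa [this] at h
  have hGanti : Antitone G := by
    apply antitone_of_deriv_nonpos
    · exact fun t => (hG' t).differentiableAt
    · intro t
      rw [(hG' t).deriv]
      have h1' : Vd t + ε * V t ≤ 0 := by
        linarith [hVd_le t]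
      have h2' : 0 < Real.exp (ε * t) := Real.exp_pos _
      exact mul_nonpos_iff.mpr (Or.inr ⟨h1', h2'.le⟩)
  have hVbound : ∀ t, 0 ≤ t → V t ≤ V 0 * Real.exp (-(ε * t)) := by
    intro t ht
    have h := hGanti ht
    have hG0 : G 0 = V 0 := by rw [hGdef]; simp
    have hGt : G t = V t * Real.exp (ε * t) := by rw [hGdef]
    rw [hG0, hGt] at h
    rw [Real.exp_neg, ← div_eq_mul_inv, le_div_iff₀ (Real.exp_pos _)]
    exact h
  -- conclude convergence
  have hdecay : Filter.Tendsto (fun t : ℝ => V 0 * Real.exp (-(ε * t)))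
      Filter.atTop (nhds 0) := by
    have h5 : Filter.Tendsto (fun t : ℝ => ε * t) Filter.atTop Filter.atTop :=
      Filter.Tendsto.const_mul_atTop hε0 Filter.tendsto_id
    have h6 : Filter.Tendsto (fun t : ℝ => -(ε * t)) Filter.atTop Filter.atBot :=
      Filter.tendsto_neg_atTop_atBot.comp h5
    have h7 : Filter.Tendsto (fun t : ℝ => Real.exp (-(ε * t))) Filter.atTop (nhds 0) := by
      have h := Real.tendsto_exp_atBot.comp h6
      simpa [Function.comp_def] using h
    have h8 := h7.const_mul (V 0)
    simpa using h8
  rw [tendsto_pi_nhds]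
  intro j
  have hsq : ∀ t : ℝ, 0 ≤ t → (x t j)^2 ≤ 2 * (V 0 * Real.exp (-(ε * t))) := by
    intro t ht
    have hbound : (x t j)^2 ≤ S2 t + N t := by
      cases j with
      | inl i =>
        have h5 : (u t i)^2 ≤ S2 t := hS2mem t i
        have h6 := hN0 t
        calc (x t (Sum.inl i))^2 = (u t i)^2 := rfl
          _ ≤ S2 t + N t := by linarith
      | inr i =>
        have h5 : (v t i)^2 ≤ N t := hNmem t i
        have h6 := hS20 t
        calc (x t (Sum.inr i))^2 = (v t i)^2 := rfl
          _ ≤ S2 t + N t := by linarith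
    have h9 := hVlow t
    have h10 := hVbound t ht
    linarith
  have hsq_tendsto : Filter.Tendsto (fun t : ℝ => (x t j)^2) Filter.atTop (nhds 0) := by
    apply tendsto_of_tendsto_of_tendsto_of_le_of_le' tendsto_const_nhds
      (by simpa using hdecay.const_mul 2)
    · exact Filter.Eventually.of_forall fun t => sq_nonneg _
    · filter_upwards [Filter.eventually_ge_atTop (0:ℝ)] with t ht
      exact hsq t ht
  have habs : Filter.Tendsto (fun t : ℝ => |x t j|) Filter.atTop (nhds 0) := by
    have hsqrt : Filter.Tendsto (fun t => Real.sqrt ((x t j)^2)) Filter.atTop (nhds 0) := by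
      have h := (Real.continuous_sqrt.tendsto 0).comp hsq_tendsto
      simpa [Function.comp_def] using h
    simpa [Real.sqrt_sq_eq_abs] using hsqrt
  exact (tendsto_zero_iff_abs_tendsto_zero _).mpr habs
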